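/- The integral ∫₀^∞ ((t²+1)^{1/3} − t^{2/3}) dt converges and equals (3/5)·∫₁^∞ dx/√(x³−1). -/

import Mathlib

open MeasureTheory Set Real Filter Topology

noncomputable def ff (t : ℝ) : ℝ := (t ^ 2 + 1) ^ ((1 : ℝ) / 3) - (t ^ 2) ^ ((1 : ℝ) / 3)
noncomputable def hh (t : ℝ) : ℝ := (t ^ 2 + 1) ^ (-(2 : ℝ) / 3)

lemma cube_aux (t : ℝ) : ((t ^ 2 + 1) ^ ((1 : ℝ) / 3)) ^ (3 : ℕ) = t ^ 2 + 1 := by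
  rw [← Real.rpow_natCast ((t ^ 2 + 1) ^ ((1 : ℝ) / 3)) 3, ← Real.rpow_mul (by positivity)]
  norm_num

lemma ff_cont : Continuous ff := by
  apply Continuous.sub
  · apply continuous_iff_continuousAt.2; intro x
    exact (Real.continuousAt_rpow_const _ _ (Or.inl (by positivity))).comp
      (by fun_prop : ContinuousAt (fun t : ℝ => t ^ 2 + 1) x)
  · apply continuous_iff_continuousAt.2; intro x
    exact (Real.continuousAt_rpow_const _ _ (Or.inr (by norm_num))).comp
      ((continuous_pow 2).continuousAt)

lemma hh_cont : Continuous hh := by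
  apply continuous_iff_continuousAt.2; intro x
  exact (Real.continuousAt_rpow_const _ _ (Or.inl (by positivity))).comp
    (by fun_prop : ContinuousAt (fun t : ℝ => t ^ 2 + 1) x)

lemma ff_nonneg (t : ℝ) : 0 ≤ ff t :=
  sub_nonneg.2 (Real.rpow_le_rpow (by positivity) (by linarith) (by norm_num))

lemma ff_bound {t : ℝ} (ht : 0 < t) : ff t ≤ t ^ (-(4 : ℝ) / 3) := by
  set a := (t ^ 2 + 1) ^ ((1 : ℝ) / 3) with ha_def
  set b := (t ^ 2) ^ ((1 : ℝ) / 3) with hb_def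
  have ha3 : a ^ (3 : ℕ) = t ^ 2 + 1 := cube_aux t
  have hb3 : b ^ (3 : ℕ) = t ^ 2 := by
    rw [hb_def, ← Real.rpow_natCast ((t ^ 2) ^ ((1 : ℝ) / 3)) 3, ← Real.rpow_mul (by positivity)]
    norm_num
  have hb2 : b ^ (2 : ℕ) = t ^ ((4 : ℝ) / 3) := by
    rw [hb_def, ← Real.rpow_natCast ((t ^ 2) ^ ((1 : ℝ) / 3)) 2,
      ← Real.rpow_mul (by positivity), ← Real.rpow_natCast t 2, ← Real.rpow_mul ht.le]
    norm_num
  have hbpos : 0 < b := Real.rpow_pos_of_pos (by positivity) _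
  have hapos : 0 < a := Real.rpow_pos_of_pos (by positivity) _
  have hba : b ≤ a := Real.rpow_le_rpow (by positivity) (by linarith) (by norm_num)
  have hkey : (a - b) * (a ^ 2 + a * b + b ^ 2) = 1 := by
    have := ha3; have := hb3; push_cast at this ⊢; nlinarith [ha3, hb3]
  have hs : 0 < a ^ 2 + a * b + b ^ 2 := by positivity
  have h1 : ff t = 1 / (a ^ 2 + a * b + b ^ 2) := by
    rw [show ff t = a - b from rfl, eq_div_iff hs.ne']; exact hkey
  have h2 : t ^ ((4 : ℝ) / 3) ≤ a ^ 2 + a * b + b ^ 2 := by nlinarith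
  rw [h1]
  have hrp : t ^ (-(4 : ℝ) / 3) = 1 / t ^ ((4 : ℝ) / 3) := by
    rw [one_div, ← Real.rpow_neg ht.le]; norm_num
  rw [hrp]
  apply div_le_div_of_nonneg_left one_pos.le ?_ h2
  all_goals positivity

lemma hh_nonneg (t : ℝ) : 0 ≤ hh t := Real.rpow_nonneg (by positivity) _

lemma hh_bound {t : ℝ} (ht : 0 < t) : hh t ≤ t ^ (-(4 : ℝ) / 3) := by
  have h1 : hh t ≤ (t ^ 2) ^ (-(2 : ℝ) / 3) :=
    Real.rpow_le_rpow_of_nonpos (by positivity) (by linarith) (by norm_num)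
  have h2 : (t ^ 2) ^ (-(2 : ℝ) / 3) = t ^ (-(4 : ℝ) / 3) := by
    rw [← Real.rpow_natCast t 2, ← Real.rpow_mul ht.le]; norm_num
  linarith

lemma aux_integrable {F : ℝ → ℝ} (hc : Continuous F) (h0 : ∀ t, 0 ≤ F t)
    (hb : ∀ t : ℝ, 0 < t → F t ≤ t ^ (-(4 : ℝ) / 3)) : IntegrableOn F (Ioi 0) volume := by
  have : Ioc (0:ℝ) 1 ∪ Ioi 1 = Ioi 0 := Ioc_union_Ioi_eq_Ioi (by norm_num)
  rw [← this]
  apply IntegrableOn.union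
  · exact hc.integrableOn_Ioc
  · apply Integrable.mono (integrableOn_Ioi_rpow_of_lt (by norm_num : (-(4:ℝ)/3) < -1) one_pos)
      hc.aestronglyMeasurable.restrict
    filter_upwards [ae_restrict_mem measurableSet_Ioi] with t ht
    have ht0 : (0:ℝ) < t := lt_trans one_pos ht
    rw [Real.norm_eq_abs, Real.norm_eq_abs, abs_of_nonneg (h0 t),
      abs_of_nonneg (Real.rpow_nonneg ht0.le _)]
    exact hb t ht0

lemma ff_integrable : IntegrableOn ff (Ioi 0) volume :=
  aux_integrable ff_cont ff_nonneg (fun t ht => ff_bound ht)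

lemma hh_integrable : IntegrableOn hh (Ioi 0) volume :=
  aux_integrable hh_cont hh_nonneg (fun t ht => hh_bound ht)

lemma deriv_a {t : ℝ} :
    HasDerivAt (fun s : ℝ => (s ^ 2 + 1) ^ ((1 : ℝ) / 3))
      (2 * t * (1 / 3) * (t ^ 2 + 1) ^ (-(2 : ℝ) / 3)) t := by
  have h1 : HasDerivAt (fun s : ℝ => s ^ 2 + 1) (2 * t) t := by
    simpa using (hasDerivAt_pow 2 t).add_const 1
  have := h1.rpow_const (p := (1 : ℝ) / 3) (Or.inl (by positivity))
  convert this using 1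
  rw [show (1:ℝ)/3 - 1 = -(2:ℝ)/3 by norm_num]

lemma deriv_g {t : ℝ} (ht : 0 < t) :
    HasDerivAt (fun s : ℝ => s * ff s) (5 / 3 * ff t - 2 / 3 * hh t) t := by
  have h2 : HasDerivAt (fun s : ℝ => s ^ 2) (2 * t) t := by
    simpa using hasDerivAt_pow 2 t
  have hb : HasDerivAt (fun s : ℝ => (s ^ 2) ^ ((1 : ℝ) / 3))
      (2 * t * ((1:ℝ) / 3) * (t ^ 2) ^ ((1:ℝ) / 3 - 1)) t := by
    have := h2.rpow_const (p := (1 : ℝ) / 3) (Or.inl (by positivity))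
    convert this using 1
  have hg := (hasDerivAt_id t).mul (deriv_a.sub hb)
  convert hg using 1
  · rfl
  · rfl
  · rfl
  rw [show (1:ℝ)/3 - 1 = -(2:ℝ)/3 by norm_num]
  have e1 : (t ^ 2 + 1) * (t ^ 2 + 1) ^ (-(2 : ℝ) / 3) = (t ^ 2 + 1) ^ ((1 : ℝ) / 3) := by
    rw [← Real.rpow_one_add' (by positivity) (by norm_num)]; norm_num
  have e2 : (t ^ 2) * (t ^ 2) ^ (-(2 : ℝ) / 3) = (t ^ 2) ^ ((1 : ℝ) / 3) := by
    rw [← Real.rpow_one_add' (by positivity) (by norm_num)]; norm_num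
  simp only [ff, hh, id_eq, Pi.sub_apply]
  linear_combination (-(2:ℝ)/3) * e1 + (2/3 : ℝ) * e2

lemma g_tendsto : Tendsto (fun t : ℝ => t * ff t) atTop (𝓝 0) := by
  apply squeeze_zero' (f := fun t : ℝ => t * ff t) (g := fun t : ℝ => t ^ (-(1:ℝ)/3))
  · filter_upwards [eventually_gt_atTop 0] with t ht
    exact mul_nonneg ht.le (ff_nonneg t)
  · filter_upwards [eventually_gt_atTop 0] with t ht
    calc t * ff t ≤ t * t ^ (-(4:ℝ)/3) := by
          exact mul_le_mul_of_nonneg_left (ff_bound ht) ht.le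
      _ = t ^ (-(1:ℝ)/3) := by
          rw [← Real.rpow_one_add' ht.le (by norm_num)]; norm_num
  · have := tendsto_rpow_neg_atTop (y := (1:ℝ)/3) (by norm_num)
    convert this using 2; norm_num

lemma main_ftc : ∫ t in Ioi (0:ℝ), (5 / 3 * ff t - 2 / 3 * hh t) = 0 := by
  have h := integral_Ioi_of_hasDerivAt_of_tendsto
    (f := fun s : ℝ => s * ff s) (f' := fun t => 5 / 3 * ff t - 2 / 3 * hh t) (a := 0) (m := 0)
    ((continuous_id.mul ff_cont).continuousWithinAt)
    (fun x hx => deriv_g hx)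
    (((ff_integrable.const_mul _).sub (hh_integrable.const_mul _)))
    g_tendsto
  simpa using h

lemma I_eq : ∫ t in Ioi (0:ℝ), ff t = 2 / 5 * ∫ t in Ioi (0:ℝ), hh t := by
  have h := main_ftc
  rw [integral_sub (ff_integrable.const_mul _) (hh_integrable.const_mul _),
    integral_const_mul, integral_const_mul] at h
  linarith

lemma phi_image : (fun t : ℝ => (t ^ 2 + 1) ^ ((1 : ℝ) / 3)) '' (Ioi 0) = Ioi 1 := by
  ext x
  constructor
  · rintro ⟨t, ht, rfl⟩
    have ht' : (0:ℝ) < t := ht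
    have h1 : (1:ℝ) < t ^ 2 + 1 := by nlinarith
    exact (Real.one_lt_rpow_iff_of_pos (by positivity)).2 (Or.inl ⟨h1, by norm_num⟩)
  · intro hx
    have hx' : (1:ℝ) < x := hx
    have hx3 : (1:ℝ) < x ^ 3 := one_lt_pow₀ hx' (by norm_num)
    refine ⟨Real.sqrt (x ^ 3 - 1), Real.sqrt_pos.2 (by linarith), ?_⟩
    simp only
    rw [Real.sq_sqrt (by linarith : (0:ℝ) ≤ x ^ 3 - 1)]
    rw [show x ^ 3 - 1 + 1 = x ^ 3 by ring, ← Real.rpow_natCast x 3,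
      ← Real.rpow_mul (by linarith : (0:ℝ) ≤ x)]
    norm_num

lemma inj_phi : InjOn (fun t : ℝ => (t ^ 2 + 1) ^ ((1 : ℝ) / 3)) (Ioi 0) := by
  have : StrictMonoOn (fun t : ℝ => (t ^ 2 + 1) ^ ((1 : ℝ) / 3)) (Ioi 0) := by
    intro a ha b hb hab
    exact Real.rpow_lt_rpow (by positivity) (by nlinarith [mem_Ioi.1 ha, mem_Ioi.1 hb])
      (by norm_num)
  exact this.injOn

lemma J_eq : ∫ x in Ioi (1:ℝ), 1 / Real.sqrt (x ^ 3 - 1)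
    = 2 / 3 * ∫ t in Ioi (0:ℝ), hh t := by
  have hder : ∀ t ∈ Ioi (0:ℝ), HasDerivWithinAt (fun t : ℝ => (t ^ 2 + 1) ^ ((1 : ℝ) / 3))
      (2 * t * (1 / 3) * (t ^ 2 + 1) ^ (-(2 : ℝ) / 3)) (Ioi 0) t :=
    fun t _ => deriv_a.hasDerivWithinAt
  rw [← phi_image, integral_image_eq_integral_abs_deriv_smul measurableSet_Ioi hder inj_phi]
  rw [← integral_const_mul]
  apply setIntegral_congr_fun measurableSet_Ioi
  intro t ht
  have ht' : (0:ℝ) < t := ht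
  have hpos : (0:ℝ) < 2 * t * (1 / 3) * (t ^ 2 + 1) ^ (-(2 : ℝ) / 3) := by positivity
  simp only [smul_eq_mul]
  rw [ abs_of_pos hpos, cube_aux t,
    show t ^ 2 + 1 - 1 = t ^ 2 by ring, Real.sqrt_sq ht'.le]
  rw [hh]
  field_simp

theorem stmt0 :
    IntegrableOn (fun t : ℝ => (t ^ 2 + 1) ^ ((1 : ℝ) / 3) - (t ^ 2) ^ ((1 : ℝ) / 3))
      (Ioi 0) volume ∧
    (∫ t in Ioi (0 : ℝ), ((t ^ 2 + 1) ^ ((1 : ℝ) / 3) - (t ^ 2) ^ ((1 : ℝ) / 3)))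
      = (3 / 5) * ∫ x in Ioi (1 : ℝ), 1 / Real.sqrt (x ^ 3 - 1) := by
  refine ⟨ff_integrable, ?_⟩
  have h1 : (∫ t in Ioi (0 : ℝ), ((t ^ 2 + 1) ^ ((1 : ℝ) / 3) - (t ^ 2) ^ ((1 : ℝ) / 3)))
      = ∫ t in Ioi (0:ℝ), ff t := rfl
  rw [h1, I_eq, J_eq]
  ring
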